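/- Let the adversary hide a set S of symbols, |S| = αn, from n symbols, and let each of m light nodes sample s symbols i.i.d. uniformly with replacement. The probability that no light node samples any hidden symbol and yet honest full nodes collect fewer than (1−α')n distinct symbols (for α' ≤ α) is at most min{(1−α)^{ms}, 2^{H(α')n}(1−α')^{ms}}; consequently the overall soundness failure probability is at most max over layers of the two-case bound max{(1−α_min)^s, 2^{max_i [H(α_i)n_i − ms·log₂(1/(1−α_i))]}}. -/
import Mathlib


open Finset

/-- The binary entropy function in base 2. -/
noncomputable def binEnt (p : ℝ) : ℝ :=
  p * Real.logb 2 (1 / p) + (1 - p) * Real.logb 2 (1 / (1 - p))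

lemma binEnt_nonneg {p : ℝ} (hp : 0 < p) (hp1 : p < 1) : 0 ≤ binEnt p := by
  unfold binEnt
  have h1 : (0:ℝ) ≤ p * Real.logb 2 (1 / p) := by
    apply mul_nonneg hp.le
    apply Real.logb_nonneg one_lt_two
    exact (le_div_iff₀ hp).mpr (by linarith)
  have h2 : (0:ℝ) ≤ (1 - p) * Real.logb 2 (1 / (1 - p)) := by
    apply mul_nonneg (by linarith)
    apply Real.logb_nonneg one_lt_two
    exact (le_div_iff₀ (by linarith)).mpr (by linarith)
  linarith

/-- the adversary hides a set `S` with `|S| = α·n` of the `n` symbols, and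
`m` light nodes each draw `s` i.i.d. uniform samples (modeled jointly as a uniformly
random `f : Fin (m·s) → Fin n`).  (a) The probability that no light node samples a hidden
symbol and yet fewer than `(1−α')·n` distinct symbols are collected (for `α' ≤ α`) is at
most `min{(1−α)^{ms}, 2^{H(α')n}·(1−α')^{ms}}`.  (b) Consequently, with layers
`i = 1,…,L` having `n_i` symbols and undecodable ratios `α_i`, any per-layer soundness
failure probabilities bounded by the two-case bound are globally bounded by
`max{(1−α_min)^s, 2^{max_i [H(α_i)·n_i − m·s·log₂(1/(1−α_i))]}}`. -/
theorem stmt18 (n m s : ℕ) (α α' : ℝ) (hn : 0 < n) (hα : 0 < α ∧ α < 1)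
    (hα' : 0 < α' ∧ α' ≤ α) (S : Finset (Fin n)) (hS : (S.card : ℝ) = α * n) :
    ((((Finset.univ : Finset (Fin (m * s) → Fin n)).filter
          (fun f => (∀ i, f i ∉ S) ∧ ((Finset.univ.image f).card : ℝ) < (1 - α') * n)).card : ℝ) /
        ((n : ℝ) ^ (m * s))
      ≤ min ((1 - α) ^ (m * s)) ((2 : ℝ) ^ (binEnt α' * n) * (1 - α') ^ (m * s))) ∧
    (∀ (L : ℕ), 0 < L → ∀ (ni : Fin L → ℕ) (αi : Fin L → ℝ),
      (∀ i, 0 < αi i ∧ αi i < 1) →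
      ∀ Pf : Fin L → ℝ,
        (∀ i, Pf i ≤ max ((1 - αi i) ^ s)
            ((2 : ℝ) ^ (binEnt (αi i) * (ni i : ℝ)) * (1 - αi i) ^ (m * s))) →
        ∀ i, Pf i ≤ max ((1 - ⨅ j, αi j) ^ s)
            ((2 : ℝ) ^ (⨆ j, (binEnt (αi j) * (ni j : ℝ) -
              (m * s : ℝ) * Real.logb 2 (1 / (1 - αi j)))))) := by
  obtain ⟨hα0, hα1⟩ := hα
  obtain ⟨hα'0, hα'α⟩ := hα'
  have hα'1 : α' < 1 := lt_of_le_of_lt hα'α hα1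
  constructor
  · -- Part (a)
    set k := m * s
    have hnpos : (0:ℝ) < (n:ℝ) := by exact_mod_cast hn
    have hsub : ((Finset.univ : Finset (Fin k → Fin n)).filter
          (fun f => (∀ i, f i ∉ S) ∧ ((Finset.univ.image f).card : ℝ) < (1 - α') * n)) ⊆
        Fintype.piFinset (fun _ : Fin k => Sᶜ) := by
      intro f hf
      rw [Finset.mem_filter] at hf
      rw [Fintype.mem_piFinset]
      intro i
      rw [Finset.mem_compl]
      exact hf.2.1 i
    have hcard : (((Finset.univ : Finset (Fin k → Fin n)).filter
          (fun f => (∀ i, f i ∉ S) ∧ ((Finset.univ.image f).card : ℝ) < (1 - α') * n)).card : ℝ)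
        ≤ ((1 - α) * n) ^ k := by
      have h1 := Finset.card_le_card hsub
      rw [Fintype.card_piFinset] at h1
      simp only [Finset.prod_const, Finset.card_univ, Fintype.card_fin] at h1
      have h2 : ((Sᶜ : Finset (Fin n)).card : ℝ) = (1 - α) * n := by
        rw [Finset.card_compl]
        have hle : S.card ≤ n := by simpa using Finset.card_le_univ S
        simp only [Fintype.card_fin]
        rw [Nat.cast_sub hle, hS]; ring
      calc (_ : ℝ) ≤ (((Sᶜ : Finset (Fin n)).card : ℝ)) ^ k := by exact_mod_cast h1
        _ = ((1 - α) * n) ^ k := by rw [h2]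
    have hbound1 : (((Finset.univ : Finset (Fin k → Fin n)).filter
          (fun f => (∀ i, f i ∉ S) ∧ ((Finset.univ.image f).card : ℝ) < (1 - α') * n)).card : ℝ)
        / ((n : ℝ) ^ k) ≤ (1 - α) ^ k := by
      rw [div_le_iff₀ (by positivity)]
      calc (_ : ℝ) ≤ ((1 - α) * n) ^ k := hcard
        _ = (1 - α) ^ k * (n:ℝ) ^ k := mul_pow _ _ _
    refine le_min hbound1 (le_trans hbound1 ?_)
    have h3 : (1 - α) ^ k ≤ (1 - α') ^ k :=
      pow_le_pow_left₀ (by linarith) (by linarith) k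
    have h4 : (1:ℝ) ≤ (2:ℝ) ^ (binEnt α' * n) := by
      apply Real.one_le_rpow one_le_two
      exact mul_nonneg (binEnt_nonneg hα'0 hα'1) (by positivity)
    calc (1 - α) ^ k ≤ (1 - α') ^ k := h3
      _ ≤ (2:ℝ) ^ (binEnt α' * n) * (1 - α') ^ k := by
          apply le_mul_of_one_le_left (pow_nonneg (by linarith) k) h4
  · -- Part (b)
    intro L hL ni αi hαi Pf hPf i
    haveI : Nonempty (Fin L) := ⟨⟨0, hL⟩⟩
    refine le_trans (hPf i) (max_le_max ?_ ?_)
    · apply pow_le_pow_left₀ (by linarith [(hαi i).2])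
      have : ⨅ j, αi j ≤ αi i := ciInf_le (Set.Finite.bddBelow (Set.finite_range _)) i
      linarith
    · have hx : (0:ℝ) < 1 - αi i := by linarith [(hαi i).2]
      have key : (2 : ℝ) ^ (binEnt (αi i) * (ni i : ℝ)) * (1 - αi i) ^ (m * s)
          = (2 : ℝ) ^ (binEnt (αi i) * (ni i : ℝ) -
              (m * s : ℝ) * Real.logb 2 (1 / (1 - αi i))) := by
        have hms : ((m * s : ℕ) : ℝ) = (m : ℝ) * s := by push_cast; ring
        have h5 : ((1 - αi i) ^ (m * s) : ℝ)
            = (2:ℝ) ^ (Real.logb 2 (1 - αi i) * ((m * s : ℕ) : ℝ)) := by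
          rw [Real.rpow_mul (by norm_num : (0:ℝ) ≤ 2),
            Real.rpow_logb two_pos (by norm_num) hx, Real.rpow_natCast]
        rw [one_div, Real.logb_inv,
          show binEnt (αi i) * (ni i : ℝ) - (m : ℝ) * s * -Real.logb 2 (1 - αi i)
            = binEnt (αi i) * (ni i : ℝ) + Real.logb 2 (1 - αi i) * ((m * s : ℕ) : ℝ) by
              rw [hms]; ring,
          Real.rpow_add two_pos, h5]
      rw [key]
      apply Real.rpow_le_rpow_of_exponent_le one_le_two
      exact le_ciSup (Set.Finite.bddAbove (Set.finite_range
        (fun j => binEnt (αi j) * (ni j : ℝ) -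
          (m * s : ℝ) * Real.logb 2 (1 / (1 - αi j))))) i
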